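/- Let F be a steerable image family of radius n and angular bandlimit V, and consider the measurement model with translations t₁,…,t_p ∈ {n,…,N−n−1}². Then E[A¹_M] = γ·S₁, where A¹_M := (1/N²)·Σ_{j∈ℤ²} M[j], S₁ := (1/(4n²))·(1/2π)∫₀^{2π} Σ_{ℓ∈ℤ²} F_φ[ℓ] dφ, and γ := 4pn²/N². -/

import Mathlib

open Real MeasureTheory ProbabilityTheory intervalIntegral

noncomputable section

/-- A steerable image family of radius `n` and angular bandlimit `V`. -/
def Steerable (n V : ℕ) (F : ℝ → ℤ × ℤ → ℝ) (g : ℤ → ℤ × ℤ → ℂ) : Prop :=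
  (∀ ν : ℤ, ∀ ℓ : ℤ × ℤ, (n : ℤ) < max |ℓ.1| |ℓ.2| → g ν ℓ = 0) ∧
  (∀ φ : ℝ, ∀ ℓ : ℤ × ℤ,
    (F φ ℓ : ℂ) =
      ∑ ν ∈ Finset.Icc (-(V : ℤ)) (V : ℤ), g ν ℓ * Complex.exp (Complex.I * (ν : ℂ) * (φ : ℂ)))

/-- Membership in the grid `{0,…,N−1}²`. -/
def InGrid (N : ℕ) (ℓ : ℤ × ℤ) : Prop :=
  0 ≤ ℓ.1 ∧ ℓ.1 ≤ (N : ℤ) - 1 ∧ 0 ≤ ℓ.2 ∧ ℓ.2 ≤ (N : ℤ) - 1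

instance (N : ℕ) (ℓ : ℤ × ℤ) : Decidable (InGrid N ℓ) := by
  unfold InGrid; infer_instance

lemma gaussianPDFReal_even' (v : NNReal) (x : ℝ) :
    gaussianPDFReal 0 v (-x) = gaussianPDFReal 0 v x := by
  unfold gaussianPDFReal
  rw [sub_zero, sub_zero, neg_sq]

lemma gauss_mean_zero (v : NNReal) :
    Integrable (fun x : ℝ => x) (gaussianReal 0 v) ∧
      ∫ x, x ∂(gaussianReal 0 v) = 0 := by
  rcases eq_or_ne v 0 with hv | hv
  · subst hv
    rw [gaussianReal_zero_var]
    refine ⟨⟨measurable_id.aestronglyMeasurable, ?_⟩, by simp [integral_dirac]⟩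
    simp [HasFiniteIntegral, lintegral_dirac]
  · have hv' : (0:ℝ) < v := lt_of_le_of_ne v.coe_nonneg (by exact_mod_cast hv.symm)
    have hb : (0:ℝ) < (2 * (v:ℝ))⁻¹ := by positivity
    set c : ℝ := (√(2 * π * v))⁻¹ with hc
    have hpdf : ∀ x : ℝ, gaussianPDFReal 0 v x = c * rexp (-(2 * (v:ℝ))⁻¹ * x ^ 2) := by
      intro x
      unfold gaussianPDFReal
      rw [sub_zero, ← hc]
      congr 1
      rw [neg_div]
      congr 1
      field_simp
    have hint : Integrable (fun x : ℝ => gaussianPDFReal 0 v x * x) := by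
      have h1 := (integrable_mul_exp_neg_mul_sq hb).const_mul c
      convert h1 using 2 with x
      rw [hpdf x]; ring
    have hodd : ∫ x : ℝ, gaussianPDFReal 0 v x * x = 0 := by
      have h1 : ∫ x : ℝ, gaussianPDFReal 0 v (-x) * (-x) = ∫ x : ℝ, gaussianPDFReal 0 v x * x :=
        integral_neg_eq_self (fun x : ℝ => gaussianPDFReal 0 v x * x) volume
      have h2 : (fun x : ℝ => gaussianPDFReal 0 v (-x) * (-x)) =
          fun x : ℝ => -(gaussianPDFReal 0 v x * x) := by
        funext x; rw [gaussianPDFReal_even']; ring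
      rw [h2, MeasureTheory.integral_neg] at h1
      linarith
    rw [gaussianReal_of_var_ne_zero _ hv]
    have hpdfd : gaussianPDF 0 v = fun x => ((gaussianPDFReal 0 v x).toNNReal : ENNReal) := rfl
    have hmeas : Measurable fun x => (gaussianPDFReal 0 v x).toNNReal :=
      (stronglyMeasurable_gaussianPDFReal 0 v).measurable.real_toNNReal
    have hsmul : (fun x : ℝ => (gaussianPDFReal 0 v x).toNNReal • x) =
        fun x : ℝ => gaussianPDFReal 0 v x * x := by
      funext x
      rw [NNReal.smul_def, smul_eq_mul, Real.coe_toNNReal _ (gaussianPDFReal_nonneg 0 v x)]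
    constructor
    · rw [hpdfd, integrable_withDensity_iff_integrable_smul hmeas]
      rw [hsmul]; exact hint
    · rw [hpdfd, integral_withDensity_eq_integral_smul hmeas, hsmul, hodd]

/-- in the multi-target detection measurement model (uniform random rotations,
i.i.d. Gaussian noise on the grid), the expected first-order autocorrelation of the
measurement satisfies `E[A¹_M] = γ·S₁` with `γ = 4pn²/N²`. -/
theorem stmt_13 {Ω : Type} [MeasureSpace Ω] [IsProbabilityMeasure (ℙ : Measure Ω)]
    (n V N p : ℕ) (hn : 1 ≤ n) (hV : 1 ≤ V) (hN : 1 ≤ N) (hp : 1 ≤ p)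
    (σ : ℝ) (hσ : 0 ≤ σ)
    (F : ℝ → ℤ × ℤ → ℝ) (g : ℤ → ℤ × ℤ → ℂ) (hF : Steerable n V F g)
    (t : Fin p → ℤ × ℤ)
    (ht : ∀ i : Fin p,
      (n : ℤ) ≤ (t i).1 ∧ (t i).1 ≤ (N : ℤ) - n - 1 ∧
      (n : ℤ) ≤ (t i).2 ∧ (t i).2 ≤ (N : ℤ) - n - 1)
    (θ : Fin p → Ω → ℝ) (ε : ℤ × ℤ → Ω → ℝ)
    (hθmeas : ∀ i : Fin p, Measurable (θ i))
    (hεmeas : ∀ ℓ : ℤ × ℤ, Measurable (ε ℓ))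
    (hθdist : ∀ i : Fin p,
      Measure.map (θ i) ℙ =
        (ENNReal.ofReal (2 * π))⁻¹ • (volume.restrict (Set.Ico (0 : ℝ) (2 * π))))
    (hεdist : ∀ ℓ : ℤ × ℤ, InGrid N ℓ →
      Measure.map (ε ℓ) ℙ = gaussianReal 0 (σ ^ 2).toNNReal)
    (hεzero : ∀ ℓ : ℤ × ℤ, ¬InGrid N ℓ → ε ℓ = 0)
    (hindep : iIndepFun (m := fun _ : Fin p ⊕ (ℤ × ℤ) => (inferInstance : MeasurableSpace ℝ))
      (Sum.elim θ ε) ℙ)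
    (M : Ω → ℤ × ℤ → ℝ)
    (hM : ∀ ω : Ω, ∀ ℓ : ℤ × ℤ,
      M ω ℓ = if InGrid N ℓ then (∑ i : Fin p, F (θ i ω) (ℓ - t i)) + ε ℓ ω else 0) :
    ∫ ω, (1 / (N : ℝ) ^ 2 * ∑' j : ℤ × ℤ, M ω j) ∂ℙ =
      (4 * (p : ℝ) * (n : ℝ) ^ 2 / (N : ℝ) ^ 2) *
        (1 / (4 * (n : ℝ) ^ 2) *
          (1 / (2 * π) * ∫ φ in (0:ℝ)..(2 * π), ∑' ℓ : ℤ × ℤ, F φ ℓ)) := by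
  obtain ⟨hg, hFe⟩ := hF
  have hπ : (0:ℝ) < 2 * π := by positivity
  set Box : Finset (ℤ × ℤ) := Finset.Icc (-(n:ℤ), -(n:ℤ)) ((n:ℤ), (n:ℤ)) with hBox
  set Grid : Finset (ℤ × ℤ) := Finset.Icc ((0:ℤ), (0:ℤ)) ((N:ℤ) - 1, (N:ℤ) - 1) with hGrid
  have hmemBox : ∀ ℓ : ℤ × ℤ, ℓ ∈ Box ↔ (|ℓ.1| ≤ (n:ℤ) ∧ |ℓ.2| ≤ (n:ℤ)) := by
    intro ℓ
    rw [hBox, Finset.mem_Icc, Prod.le_def, Prod.le_def, abs_le, abs_le]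
    tauto
  have hmemGrid : ∀ ℓ : ℤ × ℤ, ℓ ∈ Grid ↔ InGrid N ℓ := by
    intro ℓ
    rw [hGrid, Finset.mem_Icc, Prod.le_def, Prod.le_def]
    unfold InGrid
    tauto
  have hFsupp : ∀ (φ : ℝ) (ℓ : ℤ × ℤ), ℓ ∉ Box → F φ ℓ = 0 := by
    intro φ ℓ hℓ
    have hb : (n : ℤ) < max |ℓ.1| |ℓ.2| := by
      rw [hmemBox] at hℓ; push_neg at hℓ
      rcases le_or_gt |ℓ.1| (n:ℤ) with h | h
      · exact lt_max_of_lt_right (hℓ h)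
      · exact lt_max_of_lt_left h
    have h2 := hFe φ ℓ
    rw [Finset.sum_eq_zero (fun ν _ => by rw [hg ν ℓ hb, zero_mul])] at h2
    exact_mod_cast h2
  set G : ℝ → ℝ := fun φ => ∑ ℓ ∈ Box, F φ ℓ with hGdef
  have htsumF : ∀ φ : ℝ, ∑' ℓ : ℤ × ℤ, F φ ℓ = G φ :=
    fun φ => tsum_eq_sum (fun ℓ hℓ => hFsupp φ ℓ hℓ)
  have hFcont : ∀ ℓ : ℤ × ℤ, Continuous fun φ => F φ ℓ := by
    intro ℓ
    have h1 : (fun φ => F φ ℓ) = fun φ : ℝ =>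
        (∑ ν ∈ Finset.Icc (-(V:ℤ)) (V:ℤ), g ν ℓ * Complex.exp (Complex.I * (ν:ℂ) * (φ:ℂ))).re := by
      funext φ
      have := congrArg Complex.re (hFe φ ℓ)
      simpa using this
    rw [h1]
    exact Complex.continuous_re.comp (continuous_finset_sum _ fun ν _ =>
      continuous_const.mul (Complex.continuous_exp.comp
        (continuous_const.mul Complex.continuous_ofReal)))
  have hGcont : Continuous G := continuous_finset_sum _ fun ℓ _ => hFcont ℓ
  have htrans : ∀ (i : Fin p) (φ : ℝ), ∑ j ∈ Grid, F φ (j - t i) = G φ := by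
    intro i φ
    obtain ⟨h1, h2, h3, h4⟩ := ht i
    have hsub : (Box.image (· + t i)) ⊆ Grid := by
      intro j hj
      simp only [Finset.mem_image] at hj
      obtain ⟨ℓ, hℓ, rfl⟩ := hj
      rw [hmemBox] at hℓ
      rw [hmemGrid]
      obtain ⟨ha, hb⟩ := hℓ
      rw [abs_le] at ha hb
      refine ⟨?_, ?_, ?_, ?_⟩ <;> simp only [Prod.fst_add, Prod.snd_add] <;> omega
    have e1 : ∑ j ∈ Grid, F φ (j - t i) = ∑ j ∈ Box.image (· + t i), F φ (j - t i) := by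
      refine (Finset.sum_subset hsub ?_).symm
      intro j _ hj2
      apply hFsupp
      intro hmem
      exact hj2 (Finset.mem_image.mpr ⟨j - t i, hmem, by simp⟩)
    rw [e1, Finset.sum_image (fun a _ b _ h => by exact add_right_cancel h)]
    rw [hGdef]
    exact Finset.sum_congr rfl fun ℓ _ => by rw [add_sub_cancel_right]
  have hMsum : ∀ ω, ∑' j : ℤ × ℤ, M ω j =
      (∑ i : Fin p, G (θ i ω)) + ∑ j ∈ Grid, ε j ω := by
    intro ω
    have h0 : ∀ j ∉ Grid, M ω j = 0 := by
      intro j hj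
      rw [hM ω j, if_neg]
      rw [← hmemGrid]; exact hj
    rw [tsum_eq_sum h0]
    have hcongr : ∀ j ∈ Grid, M ω j = (∑ i : Fin p, F (θ i ω) (j - t i)) + ε j ω := by
      intro j hj
      rw [hM ω j, if_pos ((hmemGrid j).mp hj)]
    rw [Finset.sum_congr rfl hcongr, Finset.sum_add_distrib, Finset.sum_comm]
    congr 1
    exact Finset.sum_congr rfl fun i _ => htrans i (θ i ω)
  -- rotation terms
  have hGmapint : Integrable G
      ((ENNReal.ofReal (2*π))⁻¹ • (volume.restrict (Set.Ico (0:ℝ) (2*π)))) := by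
    have h1 : IntegrableOn G (Set.Ico (0:ℝ) (2*π)) volume :=
      (hGcont.integrableOn_Icc).mono_set Set.Ico_subset_Icc_self
    exact h1.smul_measure (ENNReal.inv_ne_top.mpr (by
      simp only [ne_eq, ENNReal.ofReal_eq_zero, not_le]; linarith))
  have hθint : ∀ i, Integrable (fun ω => G (θ i ω)) ℙ := by
    intro i
    have h2 : Integrable G (Measure.map (θ i) ℙ) := by rw [hθdist i]; exact hGmapint
    exact (integrable_map_measure hGcont.aestronglyMeasurable (hθmeas i).aemeasurable).mp h2
  have hθval : ∀ i, ∫ ω, G (θ i ω) ∂ℙ = (2*π)⁻¹ * ∫ φ in (0:ℝ)..(2*π), G φ := by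
    intro i
    rw [← MeasureTheory.integral_map (hθmeas i).aemeasurable hGcont.aestronglyMeasurable,
      hθdist i, MeasureTheory.integral_smul_measure, ENNReal.toReal_inv, ENNReal.toReal_ofReal hπ.le,
      intervalIntegral.integral_of_le hπ.le, MeasureTheory.integral_Ico_eq_integral_Ioo, ← MeasureTheory.integral_Ioc_eq_integral_Ioo,
      smul_eq_mul]
  -- noise terms
  have hεint : ∀ j ∈ Grid, Integrable (ε j) ℙ := by
    intro j hj
    have hd := hεdist j ((hmemGrid j).mp hj)
    have h2 : Integrable (fun x : ℝ => x) (Measure.map (ε j) ℙ) := by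
      rw [hd]; exact (gauss_mean_zero _).1
    exact (integrable_map_measure h2.aestronglyMeasurable (hεmeas j).aemeasurable).mp h2
  have hεval : ∀ j ∈ Grid, ∫ ω, ε j ω ∂ℙ = 0 := by
    intro j hj
    have hd := hεdist j ((hmemGrid j).mp hj)
    have h3 : ∫ ω, ε j ω ∂ℙ = ∫ x, x ∂(Measure.map (ε j) ℙ) :=
      (MeasureTheory.integral_map (hεmeas j).aemeasurable aestronglyMeasurable_id).symm
    rw [h3, hd]
    exact (gauss_mean_zero _).2
  have key : ∫ ω, (∑' j : ℤ × ℤ, M ω j) ∂ℙ =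
      (p : ℝ) * ((2*π)⁻¹ * ∫ φ in (0:ℝ)..(2*π), G φ) := by
    have e : (fun ω => ∑' j : ℤ × ℤ, M ω j) =
        fun ω => (∑ i : Fin p, G (θ i ω)) + ∑ j ∈ Grid, ε j ω := funext hMsum
    rw [e, integral_add (integrable_finset_sum _ fun i _ => hθint i)
      (integrable_finset_sum _ fun j hj => hεint j hj),
      integral_finset_sum _ fun i _ => hθint i,
      integral_finset_sum _ fun j hj => hεint j hj,
      Finset.sum_congr rfl (fun i _ => hθval i),
      Finset.sum_congr rfl (fun j hj => hεval j hj),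
      Finset.sum_const, Finset.sum_const, Finset.card_univ, Fintype.card_fin,
      nsmul_eq_mul, smul_zero, add_zero]
  have hRHS : (∫ φ in (0:ℝ)..(2*π), ∑' ℓ : ℤ × ℤ, F φ ℓ) = ∫ φ in (0:ℝ)..(2*π), G φ :=
    intervalIntegral.integral_congr fun φ _ => htsumF φ
  rw [MeasureTheory.integral_const_mul, key, hRHS]
  have hn0 : (n:ℝ) ≠ 0 := by positivity
  have hN0 : (N:ℝ) ≠ 0 := by positivity
  have hπ0 : π ≠ 0 := pi_ne_zero
  field_simp
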